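/- If a vertex v' of a finite simplicial complex K is dominated by a vertex v (every facet of K containing v' also contains v), then the inclusion of the full subcomplex K − {v'} into K is a homotopy equivalence. -/
import Mathlib


/-- An abstract simplicial complex on vertex type `V`: a collection of nonempty
finite subsets of `V` closed under passing to nonempty subsets. -/
structure ASC (V : Type*) where
  faces : Set (Finset V)
  nonempty_of_mem : ∀ {s : Finset V}, s ∈ faces → s.Nonempty
  down_closed : ∀ {s t : Finset V}, s ∈ faces → t ⊆ s → t.Nonempty → t ∈ faces

namespace ASC

variable {V W : Type*}

/-- A facet is a maximal face. -/
def IsFacet (K : ASC V) (s : Finset V) : Prop :=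
  s ∈ K.faces ∧ ∀ t ∈ K.faces, s ⊆ t → s = t

/-- `v` dominates `v'` if every facet containing `v'` also contains `v`. -/
def Dominates (K : ASC V) (v v' : V) : Prop :=
  v ≠ v' ∧ ∀ F, K.IsFacet F → v' ∈ F → v ∈ F

/-- Deletion of a vertex. -/
def delete (K : ASC V) (v' : V) : ASC V where
  faces := {s ∈ K.faces | v' ∉ s}
  nonempty_of_mem h := K.nonempty_of_mem h.1
  down_closed hs hts htne := ⟨K.down_closed hs.1 hts htne, fun hmem => hs.2 (hts hmem)⟩

/-- The complex consisting of a single point. -/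
def point (p : V) : ASC V where
  faces := {{p}}
  nonempty_of_mem h := by simp only [Set.mem_singleton_iff] at h; subst h; exact ⟨p, by simp⟩
  down_closed := by
    intro s t hs hts htne
    simp only [Set.mem_singleton_iff] at *
    subst hs
    rcases Finset.subset_singleton_iff.mp hts with h | h
    · exact absurd h (Finset.nonempty_iff_ne_empty.mp htne)
    · exact h

/-- Elementary strong collapses from `K` to `L`. -/
inductive StrongCollapsesTo : ASC V → ASC V → Prop
  | refl (K : ASC V) : StrongCollapsesTo K K
  | step {K L : ASC V} (v v' : V) : K.Dominates v v' →
      StrongCollapsesTo (K.delete v') L → StrongCollapsesTo K L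

/-- A complex is strongly collapsible if it strong collapses to a point. -/
def StronglyCollapsible (K : ASC V) : Prop :=
  ∃ p : V, StrongCollapsesTo K (ASC.point p)

/-- Elementary collapses (free face removals) from `K` to `L`. -/
inductive CollapsesTo : ASC V → ASC V → Prop
  | refl (K : ASC V) : CollapsesTo K K
  | step {K L M : ASC V} (σ τ : Finset V) :
      σ ∈ K.faces → τ ∈ K.faces → σ ⊂ τ →
      (∀ ρ ∈ K.faces, σ ⊂ ρ → ρ = τ) →
      L.faces = K.faces \ {σ, τ} →
      CollapsesTo L M → CollapsesTo K M

/-- A complex is collapsible if it collapses to a point. -/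
def Collapsible (K : ASC V) : Prop :=
  ∃ p : V, CollapsesTo K (ASC.point p)

/-- The image complex along a vertex map. -/
def map [DecidableEq W] (f : V → W) (K : ASC V) : ASC W where
  faces := (Finset.image f) '' K.faces
  nonempty_of_mem := by
    rintro s ⟨t, ht, rfl⟩
    exact (K.nonempty_of_mem ht).image f
  down_closed := by
    rintro s t ⟨u, hu, rfl⟩ hts htne
    obtain ⟨w, hw, rfl⟩ := Finset.subset_image_iff.mp hts
    exact ⟨w, K.down_closed hu hw (Finset.image_nonempty.mp htne), rfl⟩

/-- The join of two complexes on a common vertex type (intended for complexes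
with disjoint vertex sets). -/
def join [DecidableEq V] (A B : ASC V) : ASC V where
  faces := A.faces ∪ B.faces ∪ {s | ∃ a ∈ A.faces, ∃ b ∈ B.faces, s = a ∪ b}
  nonempty_of_mem := by
    rintro s (⟨h | h⟩ | ⟨a, ha, b, hb, rfl⟩)
    · exact A.nonempty_of_mem h
    · exact B.nonempty_of_mem h
    · exact (A.nonempty_of_mem ha).mono Finset.subset_union_left
  down_closed := by
    rintro s t (⟨h | h⟩ | ⟨a, ha, b, hb, rfl⟩) hts htne
    · exact Or.inl (Or.inl (A.down_closed h hts htne))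
    · exact Or.inl (Or.inr (B.down_closed h hts htne))
    · by_cases hta : (t ∩ a).Nonempty
      · by_cases htb : (t \ a).Nonempty
        · refine Or.inr ⟨t ∩ a, A.down_closed ha Finset.inter_subset_right hta,
            t \ a, B.down_closed hb ?_ htb, by ext x; simp only [Finset.mem_union, Finset.mem_inter, Finset.mem_sdiff]; tauto⟩
          intro x hx
          rcases Finset.mem_union.mp (hts (Finset.mem_sdiff.mp hx).1) with h1 | h1
          · exact absurd h1 (Finset.mem_sdiff.mp hx).2
          · exact h1
        · refine Or.inl (Or.inl (A.down_closed ha ?_ htne))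
          intro x hx
          by_contra hxa
          exact htb ⟨x, Finset.mem_sdiff.mpr ⟨hx, hxa⟩⟩
      · refine Or.inl (Or.inr (B.down_closed hb ?_ htne))
        intro x hx
        rcases Finset.mem_union.mp (hts hx) with h1 | h1
        · exact absurd ⟨x, Finset.mem_inter.mpr ⟨hx, h1⟩⟩ hta
        · exact h1

/-- Disjoint union of two complexes. -/
def disjUnion [DecidableEq V] [DecidableEq W] (K : ASC V) (L : ASC W) : ASC (V ⊕ W) where
  faces := (K.map Sum.inl).faces ∪ (L.map Sum.inr).faces
  nonempty_of_mem := by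
    rintro s (h | h)
    · exact (K.map Sum.inl).nonempty_of_mem h
    · exact (L.map Sum.inr).nonempty_of_mem h
  down_closed := by
    rintro s t (h | h) hts htne
    · exact Or.inl ((K.map Sum.inl).down_closed h hts htne)
    · exact Or.inr ((L.map Sum.inr).down_closed h hts htne)

/-- Connectivity of a complex via edge paths. -/
def Connected [DecidableEq V] (K : ASC V) : Prop :=
  ∀ u v : V, {u} ∈ K.faces → {v} ∈ K.faces →
    ∃ (k : ℕ) (c : ℕ → V), c 0 = u ∧ c k = v ∧
      ∀ i < k, ({c i, c (i + 1)} : Finset V) ∈ K.faces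

/-- A flag complex: every set of pairwise adjacent vertices spans a simplex. -/
def IsFlag [DecidableEq V] (K : ASC V) : Prop :=
  ∀ s : Finset V, s.Nonempty → (∀ v ∈ s, ({v} : Finset V) ∈ K.faces) →
    (∀ u ∈ s, ∀ v ∈ s, u ≠ v → ({u, v} : Finset V) ∈ K.faces) → s ∈ K.faces

/-- A tree: a connected `1`-dimensional complex with no (injective) cycles. -/
def IsTree [DecidableEq V] (K : ASC V) : Prop :=
  (∀ s ∈ K.faces, s.card ≤ 2) ∧ K.Connected ∧
    ¬ ∃ (k : ℕ) (c : ℕ → V), 3 ≤ k ∧ (∀ i < k, ∀ j < k, c i = c j → i = j) ∧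
      (∀ i < k, ({c i, c (i + 1)} : Finset V) ∈ K.faces) ∧ c k = c 0

/-- The star of a vertex. -/
def star [DecidableEq V] (K : ASC V) (v : V) : ASC V where
  faces := {s ∈ K.faces | insert v s ∈ K.faces}
  nonempty_of_mem h := K.nonempty_of_mem h.1
  down_closed := by
    rintro s t ⟨hs, hvs⟩ hts htne
    exact ⟨K.down_closed hs hts htne,
      K.down_closed hvs (Finset.insert_subset_insert v hts) (Finset.insert_nonempty v t)⟩

/-- The star cluster of a simplex. -/
def starCluster [DecidableEq V] (K : ASC V) (σ : Finset V) : ASC V where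
  faces := ⋃ v ∈ σ, (K.star v).faces
  nonempty_of_mem := by
    rintro s hs
    simp only [Set.mem_iUnion] at hs
    obtain ⟨v, _, hv⟩ := hs
    exact (K.star v).nonempty_of_mem hv
  down_closed := by
    intro s t hs hts htne
    simp only [Set.mem_iUnion] at *
    obtain ⟨v, hvσ, hv⟩ := hs
    exact ⟨v, hvσ, (K.star v).down_closed hv hts htne⟩

end ASC

/-- A nontrivial closed V-path for a discrete vector field. -/
def hasClosedPath {V : Type*} (S : Set (Finset V × Finset V)) : Prop :=
  ∃ (k : ℕ) (α β : ℕ → Finset V), 0 < k ∧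
    (∀ i < k, (α i, β i) ∈ S ∧ α (i + 1) ⊆ β i ∧
      (β i).card = (α (i + 1)).card + 1 ∧ α (i + 1) ≠ α i) ∧
    α k = α 0

theorem hasClosedPath.mono {V : Type*} {S T : Set (Finset V × Finset V)}
    (h : hasClosedPath S) (hST : S ⊆ T) : hasClosedPath T := by
  obtain ⟨k, α, β, hk, hstep, hcl⟩ := h
  exact ⟨k, α, β, hk, fun i hi => ⟨hST (hstep i hi).1, (hstep i hi).2.1,
    (hstep i hi).2.2.1, (hstep i hi).2.2.2⟩, hcl⟩

/-- A discrete vector field on a collection `C` of simplices: codimension-one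
pairs from `C` with each simplex occurring in at most one pair. -/
def IsMatching {V : Type*} (C : Set (Finset V)) (M : Set (Finset V × Finset V)) : Prop :=
  (∀ p ∈ M, p.1 ∈ C ∧ p.2 ∈ C ∧ p.1 ⊆ p.2 ∧ p.2.card = p.1.card + 1) ∧
  (∀ p ∈ M, ∀ q ∈ M, p ≠ q → p.1 ≠ q.1 ∧ p.1 ≠ q.2 ∧ p.2 ≠ q.1 ∧ p.2 ≠ q.2)

/-- An acyclic matching: a discrete vector field with no nontrivial closed V-path. -/
def IsAcyclicMatching {V : Type*} (C : Set (Finset V)) (M : Set (Finset V × Finset V)) : Prop :=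
  IsMatching C M ∧ ¬ hasClosedPath M

/-- A gradient vector field on a complex `K`. -/
def IsGVF {V : Type*} (K : ASC V) (S : Set (Finset V × Finset V)) : Prop :=
  IsAcyclicMatching K.faces S

theorem IsGVF.mono {V : Type*} {K : ASC V} {S T : Set (Finset V × Finset V)}
    (h : IsGVF K T) (hST : S ⊆ T) : IsGVF K S :=
  ⟨⟨fun p hp => h.1.1 p (hST hp), fun p hp q hq => h.1.2 p (hST hp) q (hST hq)⟩,
    fun hc => h.2 (hc.mono hST)⟩

/-- The Morse complex of `K`: vertices are primitive gradient vector fields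
(codimension-one pairs), faces are gradient vector fields. -/
def MorseComplex {V : Type*} (K : ASC V) : ASC (Finset V × Finset V) where
  faces := {s | s.Nonempty ∧ IsGVF K ↑s}
  nonempty_of_mem h := h.1
  down_closed := by
    intro s t hs hts htne
    exact ⟨htne, hs.2.mono (Finset.coe_subset.mpr hts)⟩

section Spaces

/-- The geometric realization of a complex on a finite vertex type. -/
abbrev ASC.realization {V : Type*} [Fintype V] (K : ASC V) : Type _ :=
  {f : V → ℝ // (∀ v, 0 ≤ f v) ∧ (∑ v, f v) = 1 ∧ ∃ s ∈ K.faces, ∀ v, f v ≠ 0 → v ∈ s}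

/-- The `n`-sphere. -/
abbrev Sph (n : ℕ) := Metric.sphere (0 : EuclideanSpace ℝ (Fin (n + 1))) 1

noncomputable def spherePt (n : ℕ) : Sph n :=
  ⟨EuclideanSpace.single 0 1, by
    simp [mem_sphere_zero_iff_norm, EuclideanSpace.norm_single]⟩

/-- The wedge of `k` copies of the `n`-sphere (a point if `k = 0`). -/
def Wedge (k n : ℕ) : Type :=
  Quot (fun p q : (Fin k × Sph n) ⊕ Unit =>
    (∃ i : Fin k, p = Sum.inl (i, spherePt n)) ∧ q = Sum.inr ())

noncomputable instance (k n : ℕ) : TopologicalSpace (Wedge k n) := by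
  unfold Wedge; infer_instance

/-- Unreduced suspension. -/
def Susp (X : Type*) [TopologicalSpace X] : Type _ :=
  Quot (fun p q : X × unitInterval => p.2 = q.2 ∧ (p.2 = 0 ∨ p.2 = 1))

instance (X : Type*) [TopologicalSpace X] : TopologicalSpace (Susp X) := by
  unfold Susp; infer_instance

/-- Iterated suspension, as an operation on bundled topological spaces. -/
noncomputable def iterSusp : ℕ → TopCat → TopCat
  | 0, X => X
  | (n + 1), X => TopCat.of (Susp (iterSusp n X))

end Spaces

section Graphs

/-- The `1`-dimensional complex spanned by a set of (edge) finsets. -/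
def graphASC {V : Type*} (E : Set (Finset V)) : ASC V where
  faces := {s | s.Nonempty ∧ ∃ e ∈ E, s ⊆ e}
  nonempty_of_mem h := h.1
  down_closed := by
    rintro s t ⟨_, e, he, hse⟩ hts htne
    exact ⟨htne, e, he, hts.trans hse⟩

/-- The path of length `u` on vertices `0, 1, …, u`. -/
def pathComplex (u : ℕ) : ASC (Fin (u + 1)) :=
  graphASC {e | ∃ i : Fin u, e = {i.castSucc, i.succ}}

/-- Vertex type for a path of length `t` with extended stars `S_{m,n}` and
`S_{k,l}` attached at the two endpoints. -/
abbrev WGV (t m n k l : ℕ) :=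
  Fin (t + 1) ⊕ (Fin m ⊕ Fin n × Fin 2) ⊕ (Fin k ⊕ Fin l × Fin 2)

/-- The graph `P_t ∨ S_{m,n} ∨ S_{k,l}`: the extended star `S_{m,n}` (a one-point
union of `m` paths of length 1 and `n` paths of length 2) has its center at the
endpoint `v₀` of the path, and `S_{k,l}` has its center at the endpoint `v_t`.
With `t = 0` (and `k = l = 0`) this is the extended star graph `S_{m,n}` itself. -/
def wedgeGraph (t m n k l : ℕ) : ASC (WGV t m n k l) :=
  graphASC {e |
    (∃ i : Fin t, e = {Sum.inl i.castSucc, Sum.inl i.succ}) ∨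
    (∃ j : Fin m, e = {Sum.inl 0, Sum.inr (Sum.inl (Sum.inl j))}) ∨
    (∃ i : Fin n, e = {Sum.inl 0, Sum.inr (Sum.inl (Sum.inr (i, 0)))}) ∨
    (∃ i : Fin n, e = {Sum.inr (Sum.inl (Sum.inr (i, 0))), Sum.inr (Sum.inl (Sum.inr (i, 1)))}) ∨
    (∃ j : Fin k, e = {Sum.inl (Fin.last t), Sum.inr (Sum.inr (Sum.inl j))}) ∨
    (∃ s : Fin l, e = {Sum.inl (Fin.last t), Sum.inr (Sum.inr (Sum.inr (s, 0)))}) ∨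
    (∃ s : Fin l, e = {Sum.inr (Sum.inr (Sum.inr (s, 0))), Sum.inr (Sum.inr (Sum.inr (s, 1)))})}

/-- `K ∨_v P_m`: attach a path of length `m` to the vertex `v` of `K` by one
endpoint. -/
def attachPath {V : Type*} [DecidableEq V] (K : ASC V) (v : V) (m : ℕ) : ASC (V ⊕ Fin m) where
  faces := (K.map Sum.inl).faces ∪
    {s | s.Nonempty ∧ ∃ e : Finset (V ⊕ Fin m),
      ((∃ i : Fin m, i.val = 0 ∧ e = {Sum.inl v, Sum.inr i}) ∨
       (∃ i j : Fin m, j.val = i.val + 1 ∧ e = {Sum.inr i, Sum.inr j})) ∧ s ⊆ e}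
  nonempty_of_mem := by
    rintro s (h | h)
    · exact (K.map Sum.inl).nonempty_of_mem h
    · exact h.1
  down_closed := by
    rintro s t (h | ⟨_, e, he, hse⟩) hts htne
    · exact Or.inl ((K.map Sum.inl).down_closed h hts htne)
    · exact Or.inr ⟨htne, e, he, hts.trans hse⟩

end Graphs

section Posets

/-- An alternating cycle `b₁ ≻ a₁ ≺ b₂ ≻ a₂ ≺ ⋯ ≺ b_p ≻ a_p ≺ b₁` for a set of
covering pairs in a poset. -/
def HasPosetCycle {P : Type*} [PartialOrder P] (S : Set (P × P)) : Prop :=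
  ∃ p : ℕ, 2 ≤ p ∧ ∃ a b : ℕ → P,
    (∀ i < p, (a i, b i) ∈ S) ∧
    (∀ i < p, a i ⋖ b ((i + 1) % p)) ∧
    (∀ i < p, ∀ j < p, a i = a j → i = j) ∧
    (∀ i < p, ∀ j < p, b i = b j → i = j)

theorem HasPosetCycle.mono {P : Type*} [PartialOrder P] {S T : Set (P × P)}
    (h : HasPosetCycle S) (hST : S ⊆ T) : HasPosetCycle T := by
  obtain ⟨p, hp, a, b, h1, h2, h3, h4⟩ := h
  exact ⟨p, hp, a, b, fun i hi => hST (h1 i hi), h2, h3, h4⟩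

/-- The complex `f(P)` of acyclic matchings on the Hasse diagram of a poset `P`:
vertices are covering pairs, faces are acyclic matchings. -/
def posetMatchingComplex (P : Type*) [PartialOrder P] : ASC (P × P) where
  faces := {s | s.Nonempty ∧ (∀ p ∈ s, p.1 ⋖ p.2) ∧
    (∀ p ∈ s, ∀ q ∈ s, p ≠ q → p.1 ≠ q.1 ∧ p.1 ≠ q.2 ∧ p.2 ≠ q.1 ∧ p.2 ≠ q.2) ∧
    ¬ HasPosetCycle (↑s : Set (P × P))}
  nonempty_of_mem h := h.1
  down_closed := by
    intro s t hs hts htne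
    refine ⟨htne, fun p hp => hs.2.1 p (hts hp),
      fun p hp q hq => hs.2.2.1 p (hts hp) q (hts hq), fun hc => hs.2.2.2 ?_⟩
    exact hc.mono (Finset.coe_subset.mpr hts)

end Posets

section proof15
variable {V : Type*} [Fintype V] [DecidableEq V]

variable {V : Type*} [Fintype V] [DecidableEq V]

lemma ASC.exists_facet (K : ASC V) {s : Finset V} (hs : s ∈ K.faces) :
    ∃ F, K.IsFacet F ∧ s ⊆ F := by
  classical
  let T : Finset (Finset V) := Finset.univ.filter (fun t => t ∈ K.faces ∧ s ⊆ t)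
  have hsT : s ∈ T := by simp [T, hs]
  obtain ⟨F, hFT, hmax⟩ := T.exists_max_image Finset.card ⟨s, hsT⟩
  simp only [T, Finset.mem_filter, Finset.mem_univ, true_and] at hFT
  refine ⟨F, ⟨hFT.1, ?_⟩, hFT.2⟩
  intro t ht hFt
  have htT : t ∈ T := by simp [T, ht, hFT.2.trans hFt]
  exact Finset.eq_of_subset_of_card_le hFt (by simpa [T] using hmax t htT)

noncomputable def Rm (v v' : V) (f : V → ℝ) : V → ℝ :=
  fun w => if w = v' then 0 else if w = v then f v + f v' else f w

lemma Rm_sum {v v' : V} (hvv' : v ≠ v') (f : V → ℝ) :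
    ∑ w, Rm v v' f w = ∑ w, f w := by
  have he : ∀ w, Rm v v' f w
      = f w + (if w = v then f v' else 0) - (if w = v' then f v' else 0) := by
    intro w
    unfold Rm
    by_cases h1 : w = v' <;> by_cases h2 : w = v <;>
      simp_all <;> ring
  simp only [he]
  rw [Finset.sum_sub_distrib, Finset.sum_add_distrib]
  simp

lemma Rm_nonneg {v v' : V} (f : V → ℝ) (hf : ∀ w, 0 ≤ f w) (w : V) :
    0 ≤ Rm v v' f w := by
  unfold Rm
  split_ifs
  · exact le_refl 0
  · exact add_nonneg (hf v) (hf v')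
  · exact hf w

-- Lemma A: combined support in a face of K
lemma support_A (K : ASC V) {v v' : V} (h : K.Dominates v v')
    {f : V → ℝ} {s : Finset V} (hs : s ∈ K.faces) (hsupp : ∀ w, f w ≠ 0 → w ∈ s) :
    ∃ F ∈ K.faces, (∀ w, f w ≠ 0 → w ∈ F) ∧ (∀ w, Rm v v' f w ≠ 0 → w ∈ F) := by
  by_cases hv' : v' ∈ s
  · obtain ⟨F, hF, hsF⟩ := K.exists_facet hs
    have hvF : v ∈ F := h.2 F hF (hsF hv')
    refine ⟨F, hF.1, fun w hw => hsF (hsupp w hw), fun w hw => ?_⟩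
    unfold Rm at hw
    by_cases h1 : w = v'
    · simp [h1] at hw
    · by_cases h2 : w = v
      · exact h2 ▸ hvF
      · simp [h1, h2] at hw
        exact hsF (hsupp w hw)
  · have hfv' : f v' = 0 := by
      by_contra hne; exact hv' (hsupp v' hne)
    refine ⟨s, hs, hsupp, fun w hw => ?_⟩
    unfold Rm at hw
    by_cases h1 : w = v'
    · simp [h1] at hw
    · by_cases h2 : w = v
      · subst h2
        simp [h1, hfv'] at hw
        exact hsupp w hw
      · simp [h1, h2] at hw
        exact hsupp w hw

-- Lemma B: support of Rm in a face of the deletion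
lemma support_B (K : ASC V) {v v' : V} (h : K.Dominates v v')
    {f : V → ℝ} {s : Finset V} (hs : s ∈ K.faces) (hsupp : ∀ w, f w ≠ 0 → w ∈ s) :
    ∃ s' ∈ (K.delete v').faces, ∀ w, Rm v v' f w ≠ 0 → w ∈ s' := by
  by_cases hv' : v' ∈ s
  · obtain ⟨F, hF, hsF⟩ := K.exists_facet hs
    have hvF : v ∈ F := h.2 F hF (hsF hv')
    refine ⟨(insert v s).erase v', ⟨K.down_closed hF.1 ?_ ⟨v, by simp [h.1]⟩,
      by simp⟩, fun w hw => ?_⟩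
    · intro x hx
      rcases Finset.mem_insert.mp (Finset.mem_of_mem_erase hx) with h1 | h1
      · exact h1 ▸ hvF
      · exact hsF h1
    · unfold Rm at hw
      by_cases h1 : w = v'
      · simp [h1] at hw
      · rw [Finset.mem_erase, Finset.mem_insert]
        by_cases h2 : w = v
        · exact ⟨h1, Or.inl h2⟩
        · simp [h1, h2] at hw
          exact ⟨h1, Or.inr (hsupp w hw)⟩
  · have hfv' : f v' = 0 := by
      by_contra hne; exact hv' (hsupp v' hne)
    refine ⟨s, ⟨hs, hv'⟩, fun w hw => ?_⟩
    unfold Rm at hw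
    by_cases h1 : w = v'
    · simp [h1] at hw
    · by_cases h2 : w = v
      · subst h2; simp [h1, hfv'] at hw; exact hsupp w hw
      · simp [h1, h2] at hw; exact hsupp w hw


lemma Rm_continuous (v v' : V) : Continuous (Rm v v') := by
  apply continuous_pi
  intro w
  unfold Rm
  by_cases h1 : w = v'
  · simp only [if_pos h1]; exact continuous_const
  · by_cases h2 : w = v
    · simp only [if_neg h1, if_pos h2]
      exact (continuous_apply v).add (continuous_apply v')
    · simp only [if_neg h1, if_neg h2]
      exact continuous_apply w

noncomputable def Hmap (v v' : V) (t : ℝ) (f : V → ℝ) : V → ℝ :=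
  fun w => (1 - t) * Rm v v' f w + t * f w

lemma Hmap_mem (K : ASC V) {v v' : V} (h : K.Dominates v v')
    (t : ℝ) (ht0 : 0 ≤ t) (ht1 : t ≤ 1) (f : K.realization) :
    (∀ w, 0 ≤ Hmap v v' t f.1 w) ∧ (∑ w, Hmap v v' t f.1 w) = 1 ∧
      ∃ s ∈ K.faces, ∀ w, Hmap v v' t f.1 w ≠ 0 → w ∈ s := by
  obtain ⟨hpos, hsum, s, hs, hsupp⟩ := f.2
  refine ⟨fun w => add_nonneg (mul_nonneg (by linarith) (Rm_nonneg f.1 hpos w))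
      (mul_nonneg ht0 (hpos w)), ?_, ?_⟩
  · unfold Hmap
    rw [Finset.sum_add_distrib, ← Finset.mul_sum, ← Finset.mul_sum, Rm_sum h.1, hsum]
    ring
  · obtain ⟨F, hF, hsF, hRF⟩ := support_A K h hs hsupp
    refine ⟨F, hF, fun w hw => ?_⟩
    by_contra hwF
    have h1 : f.1 w = 0 := by by_contra hne; exact hwF (hsF w hne)
    have h2 : Rm v v' f.1 w = 0 := by by_contra hne; exact hwF (hRF w hne)
    simp [Hmap, h1, h2] at hw

theorem strong_collapse_homotopyEquiv_aux (K : ASC V) (v v' : V) (h : K.Dominates v v') :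
    ∃ e : ContinuousMap.HomotopyEquiv ((K.delete v').realization) (K.realization),
      ∀ x : (K.delete v').realization, (e.toFun x).1 = x.1 := by
  classical
  let ι : C((K.delete v').realization, K.realization) :=
    ⟨fun x => ⟨x.1, x.2.1, x.2.2.1, by
        obtain ⟨s, hs, hsupp⟩ := x.2.2.2
        exact ⟨s, hs.1, hsupp⟩⟩,
      Continuous.subtype_mk continuous_subtype_val _⟩
  let r : C(K.realization, (K.delete v').realization) :=
    ⟨fun f => ⟨Rm v v' f.1, fun w => Rm_nonneg f.1 f.2.1 w,
        by rw [Rm_sum h.1 f.1]; exact f.2.2.1,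
        by obtain ⟨s, hs, hsupp⟩ := f.2.2.2; exact support_B K h hs hsupp⟩,
      Continuous.subtype_mk ((Rm_continuous v v').comp continuous_subtype_val) _⟩
  have c1 : Continuous fun p : unitInterval × K.realization => (p.1.1 : ℝ) :=
    continuous_subtype_val.comp continuous_fst
  have c2 : Continuous fun p : unitInterval × K.realization => p.2.1 :=
    continuous_subtype_val.comp continuous_snd
  refine ⟨⟨ι, r, ?_, ?_⟩, fun x => rfl⟩
  · have heq : r.comp ι = ContinuousMap.id _ := by
      ext x w
      obtain ⟨s, hs, hsupp⟩ := x.2.2.2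
      have hv' : x.1 v' = 0 := by
        by_contra hne; exact hs.2 (hsupp v' hne)
      show Rm v v' x.1 w = x.1 w
      unfold Rm
      by_cases h1 : w = v'
      · simp [h1, hv']
      · by_cases h2 : w = v
        · simp [h1, h2, hv', h.1]
        · simp [h1, h2]
    rw [heq]
  · refine ⟨⟨⟨fun p => ⟨Hmap v v' p.1.1 p.2.1,
      Hmap_mem K h p.1.1 p.1.2.1 p.1.2.2 p.2⟩, ?_⟩, ?_, ?_⟩⟩
    · refine Continuous.subtype_mk (continuous_pi fun w => ?_) _
      exact ((continuous_const.sub c1).mul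
          ((continuous_apply w).comp ((Rm_continuous v v').comp c2))).add
        (c1.mul ((continuous_apply w).comp c2))
    · intro x
      apply Subtype.ext
      funext w
      show Hmap v v' 0 x.1 w = Rm v v' x.1 w
      simp [Hmap]
    · intro x
      apply Subtype.ext
      funext w
      show Hmap v v' 1 x.1 w = x.1 w
      simp [Hmap]

end proof15

/-- If `v'` is dominated by `v` in a finite simplicial complex `K`, then
the inclusion of `K - {v'}` into `K` is a homotopy equivalence. -/
theorem strong_collapse_homotopyEquiv {V : Type*} [Fintype V] [DecidableEq V]
    (K : ASC V) (v v' : V) (h : K.Dominates v v') :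
    ∃ e : ContinuousMap.HomotopyEquiv ((K.delete v').realization) (K.realization),
      ∀ x : (K.delete v').realization, (e.toFun x).1 = x.1 := by
  exact strong_collapse_homotopyEquiv_aux K v v' h
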